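/- There exists a constant c such that every finite unit interval graph G satisfies χ(G)/3 ≤ χ₁(G) ≤ χ(G)/3 + c. -/

import Mathlib

open SimpleGraph

/-- A 1-selection on `G`: each vertex `v` selects (at most) one pair containing `v`;
deleting the selected pairs from the edge set removes at most one edge incident
to each vertex.  (Selecting a non-edge, e.g. the diagonal, deletes nothing at `v`.) -/
def IsOneSelection {V : Type*} (G : SimpleGraph V) (f : V → Sym2 V) : Prop :=
  ∀ v : V, v ∈ f v

/-- The 1-removed graph `G_f`. -/
def oneRemoved {V : Type*} (G : SimpleGraph V) (f : V → Sym2 V) : SimpleGraph V :=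
  G.deleteEdges (Set.range f)

/-- The chromatic number of `G` as a natural number. -/
noncomputable def chromNum {V : Type*} (G : SimpleGraph V) : ℕ :=
  sInf {n : ℕ | G.Colorable n}

/-- The robust chromatic number `χ₁(G)`: the minimum of `χ(G_f)` over all 1-selections. -/
noncomputable def robustChromNum {V : Type*} (G : SimpleGraph V) : ℕ :=
  sInf {m : ℕ | ∃ f : V → Sym2 V, IsOneSelection G f ∧ chromNum (oneRemoved G f) = m}

/-- The robust clique number `ω₁(G)`: the minimum of `ω(G_f)` over all 1-selections. -/
noncomputable def robustCliqueNum {V : Type*} (G : SimpleGraph V) : ℕ :=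
  sInf {m : ℕ | ∃ f : V → Sym2 V, IsOneSelection G f ∧ (oneRemoved G f).cliqueNum = m}

/-- A set of vertices is independent if no two of its elements are adjacent. -/
def IsIndepVxSet {V : Type*} (G : SimpleGraph V) (s : Set V) : Prop :=
  s.Pairwise fun a b => ¬ G.Adj a b

/-- The independence number of `G`. -/
noncomputable def indepNum {V : Type*} (G : SimpleGraph V) : ℕ :=
  sSup {n : ℕ | ∃ s : Finset V, IsIndepVxSet G ↑s ∧ s.card = n}

/-- The robust independence number `α₁(G)`: the maximum of `α(G_f)` over all 1-selections. -/
noncomputable def robustIndepNum {V : Type*} (G : SimpleGraph V) : ℕ :=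
  sSup {m : ℕ | ∃ f : V → Sym2 V, IsOneSelection G f ∧ _root_.indepNum (oneRemoved G f) = m}

/-- `U` is robust independent in `G` if some 1-selection makes it independent. -/
def IsRobustIndep {V : Type*} (G : SimpleGraph V) (U : Set V) : Prop :=
  ∃ f : V → Sym2 V, IsOneSelection G f ∧ IsIndepVxSet (oneRemoved G f) U

/-- Threshold graph. -/
def IsThresholdGraph {V : Type*} (G : SimpleGraph V) : Prop :=
  ∃ (h : ℝ) (g : V → ℝ), ∀ x y : V, x ≠ y → (G.Adj x y ↔ g x + g y > h)

/-- `G` is ω-unique: it has exactly one clique of order `ω(G)`. -/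
def IsOmegaUnique {V : Type*} (G : SimpleGraph V) : Prop :=
  ∃! s : Finset V, G.IsNClique G.cliqueNum s

/-- Split graph: vertex set partitions into a clique and an independent set. -/
def IsSplitGraph {V : Type*} (G : SimpleGraph V) : Prop :=
  ∃ A : Set V, G.IsClique A ∧ IsIndepVxSet G Aᶜ

/-- Chordal graph: no induced cycle of length greater than 3. -/
def IsChordalGraph {V : Type*} (G : SimpleGraph V) : Prop :=
  ∀ n : ℕ, 4 ≤ n → ¬ ∃ φ : Fin n ↪ V,
    ∀ i j : Fin n, G.Adj (φ i) (φ j) ↔ (SimpleGraph.cycleGraph n).Adj i j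

/-- Interval graph: vertices can be assigned nonempty closed real intervals so that
two distinct vertices are adjacent iff their intervals intersect. -/
def IsIntervalGraph {V : Type*} (G : SimpleGraph V) : Prop :=
  ∃ a b : V → ℝ, (∀ v, a v ≤ b v) ∧
    ∀ u v : V, u ≠ v →
      (G.Adj u v ↔ (Set.Icc (a u) (b u) ∩ Set.Icc (a v) (b v)).Nonempty)

/-- Unit interval graph: vertices can be labelled by reals so that two distinct
vertices are adjacent iff their labels are at distance less than 1. -/
def IsUnitIntervalGraph {V : Type*} (G : SimpleGraph V) : Prop :=
  ∃ r : V → ℝ, ∀ u v : V, u ≠ v → (G.Adj u v ↔ |r u - r v| < 1)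

/-- Quasi-unicyclic: every connected component contains at most one cycle,
i.e. any two cycles lying in the same component have the same edge set. -/
def QuasiUnicyclic {V : Type*} [DecidableEq V] (G : SimpleGraph V) : Prop :=
  ∀ (u v : V) (p : G.Walk u u) (q : G.Walk v v),
    p.IsCycle → q.IsCycle → G.Reachable u v →
      p.edges.toFinset = q.edges.toFinset

/-- The Kneser graph `KG(n,k)`. -/
def kneserGraph (n k : ℕ) : SimpleGraph {s : Finset (Fin n) // s.card = k} where
  Adj a b := a ≠ b ∧ Disjoint a.1 b.1
  symm := by
    constructor
    intro a b hab
    exact ⟨hab.1.symm, hab.2.symm⟩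
  loopless := by
    constructor
    intro a ha
    exact ha.1 rfl


section AuxRobust

lemma pf3aux : ∀ (n : ℕ) (V : Type) [Fintype V], Fintype.card V ≤ n →
    ∀ (G : SimpleGraph V) (g : V → V),
    (∀ u v : V, G.Adj u v → ∃ x, s(x, g x) = s(u, v)) → G.Colorable 3 := by
  intro n
  induction n with
  | zero =>
    intro V _ hcard G g _
    have : IsEmpty V := Fintype.card_eq_zero_iff.mp (Nat.le_zero.mp hcard)
    exact ⟨Coloring.mk (fun v => isEmptyElim v) (fun {v} => isEmptyElim v)⟩
  | succ n ih =>
    intro V _ hcard G g hedge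
    classical
    cases isEmpty_or_nonempty V with
    | inl h => exact ⟨Coloring.mk (fun v => isEmptyElim v) (fun {v} => isEmptyElim v)⟩
    | inr hne =>
      -- there is a vertex of degree ≤ 2
      have hEsub : G.edgeFinset ⊆ Finset.univ.image (fun x => s(x, g x)) := by
        intro e he
        rw [mem_edgeFinset] at he
        induction e with
        | _ u v =>
          obtain ⟨x, hx⟩ := hedge u v he
          exact Finset.mem_image.mpr ⟨x, Finset.mem_univ x, hx⟩
      have hEcard : G.edgeFinset.card ≤ Fintype.card V := by
        calc G.edgeFinset.card ≤ (Finset.univ.image (fun x => s(x, g x))).card :=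
              Finset.card_le_card hEsub
          _ ≤ Finset.univ.card := Finset.card_image_le
          _ = Fintype.card V := Finset.card_univ
      have hdeg : ∃ v : V, G.degree v ≤ 2 := by
        by_contra hc
        push_neg at hc
        have hsum : 3 * Fintype.card V ≤ ∑ v : V, G.degree v := by
          calc 3 * Fintype.card V = ∑ _v : V, 3 := by
                simp [Finset.sum_const, Finset.card_univ, Nat.mul_comm]
            _ ≤ ∑ v : V, G.degree v := Finset.sum_le_sum (fun v _ => hc v)
        rw [G.sum_degrees_eq_twice_card_edges] at hsum
        have : Fintype.card V = 0 := by omega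
        exact (Fintype.card_pos).ne' this
      obtain ⟨v, hv⟩ := hdeg
      -- restricted graph
      set V' := {u : V // u ≠ v} with hV'
      have hcard' : Fintype.card V' ≤ n := by
        have : Fintype.card V' = Fintype.card V - 1 := by
          simp [hV', Fintype.card_subtype_compl]
        omega
      let G' : SimpleGraph V' := G.comap Subtype.val
      let g' : V' → V' := fun u => if h : g u.1 = v then u else ⟨g u.1, h⟩
      have hedge' : ∀ a b : V', G'.Adj a b → ∃ x, s(x, g' x) = s(a, b) := by
        intro a b hab
        obtain ⟨x, hx⟩ := hedge a.1 b.1 hab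
        rcases Sym2.eq_iff.mp hx with ⟨h1, h2⟩ | ⟨h1, h2⟩
        · have hxv : x ≠ v := h1 ▸ a.2
          have hgx : g x ≠ v := h2 ▸ b.2
          refine ⟨⟨x, hxv⟩, ?_⟩
          have : g' ⟨x, hxv⟩ = ⟨g x, hgx⟩ := by simp [g', hgx]
          rw [this]
          exact Sym2.eq_iff.mpr (Or.inl ⟨Subtype.ext h1, Subtype.ext h2⟩)
        · have hxv : x ≠ v := h1 ▸ b.2
          have hgx : g x ≠ v := h2 ▸ a.2
          refine ⟨⟨x, hxv⟩, ?_⟩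
          have : g' ⟨x, hxv⟩ = ⟨g x, hgx⟩ := by simp [g', hgx]
          rw [this]
          exact Sym2.eq_iff.mpr (Or.inr ⟨Subtype.ext h1, Subtype.ext h2⟩)
      obtain ⟨c'⟩ := ih V' hcard' G' g' hedge'
      -- extend to v
      let h0 : V → Fin 3 := fun u => if h : u = v then 0 else c' ⟨u, h⟩
      let used : Finset (Fin 3) := (G.neighborFinset v).image h0
      have husedcard : used.card < 3 := by
        have h1 : used.card ≤ (G.neighborFinset v).card := Finset.card_image_le
        rw [card_neighborFinset_eq_degree] at h1
        omega
      have hcompl : usedᶜ.Nonempty := by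
        rw [← Finset.card_pos, Finset.card_compl]
        simp only [Fintype.card_fin]
        omega
      obtain ⟨a, ha⟩ := hcompl
      have ha' : a ∉ used := Finset.mem_compl.mp ha
      let c : V → Fin 3 := fun u => if h : u = v then a else c' ⟨u, h⟩
      refine ⟨Coloring.mk c ?_⟩
      intro x y hxy
      have hxyne : x ≠ y := G.ne_of_adj hxy
      by_cases hx : x = v
      · have hy : y ≠ v := fun hyv => hxyne (hx.trans hyv.symm)
        have hmem : h0 y ∈ used := Finset.mem_image.mpr
          ⟨y, by rw [mem_neighborFinset]; exact hx ▸ hxy, rfl⟩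
        have h1 : c x = a := dif_pos hx
        have h2 : c y = h0 y := by
          show dite _ _ _ = dite _ _ _
          rw [dif_neg hy, dif_neg hy]
        rw [h1, h2]
        exact fun h => ha' (h ▸ hmem)
      · by_cases hy : y = v
        · have hmem : h0 x ∈ used := Finset.mem_image.mpr
            ⟨x, by rw [mem_neighborFinset]; exact hy ▸ hxy.symm, rfl⟩
          have h1 : c y = a := dif_pos hy
          have h2 : c x = h0 x := by
            show dite _ _ _ = dite _ _ _
            rw [dif_neg hx, dif_neg hx]
          rw [h1, h2]
          exact fun h => ha' (h ▸ hmem)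
        · have hadj' : G'.Adj ⟨x, hx⟩ ⟨y, hy⟩ := hxy
          have hval := c'.valid hadj'
          have h1 : c x = c' ⟨x, hx⟩ := dif_neg hx
          have h2 : c y = c' ⟨y, hy⟩ := dif_neg hy
          rw [h1, h2]
          exact hval

lemma pf3 (V : Type) [Fintype V] (G : SimpleGraph V) (g : V → V)
    (h : ∀ u v : V, G.Adj u v → ∃ x, s(x, g x) = s(u, v)) : G.Colorable 3 :=
  pf3aux (Fintype.card V) V le_rfl G g h

lemma chromNum_colorable (V : Type) [Fintype V] (G : SimpleGraph V) :
    G.Colorable (chromNum G) :=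
  Nat.sInf_mem (⟨Fintype.card V, G.colorable_of_fintype⟩ : {n : ℕ | G.Colorable n}.Nonempty)

lemma chromNum_le {V : Type} (G : SimpleGraph V) {n : ℕ} (h : G.Colorable n) :
    chromNum G ≤ n :=
  Nat.sInf_le (show n ∈ {n : ℕ | G.Colorable n} from h)

lemma lower_bound (V : Type) [Fintype V] (G : SimpleGraph V) (f : V → Sym2 V)
    (hf : IsOneSelection G f) : chromNum G ≤ 3 * chromNum (oneRemoved G f) := by
  classical
  set m := chromNum (oneRemoved G f) with hm
  obtain ⟨c1⟩ := chromNum_colorable V (oneRemoved G f)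
  have hg : ∀ v : V, ∃ w, f v = s(v, w) := fun v =>
    ⟨Sym2.Mem.other (hf v), (Sym2.other_spec (hf v)).symm⟩
  choose g hgs using hg
  let R : SimpleGraph V :=
    { Adj := fun u v => G.Adj u v ∧ s(u, v) ∈ Set.range f
      symm := by
        constructor
        intro u v h
        exact ⟨h.1.symm, by rw [Sym2.eq_swap]; exact h.2⟩
      loopless := ⟨fun v h => G.loopless.irrefl v h.1⟩ }
  have hedge : ∀ u v : V, R.Adj u v → ∃ x, s(x, g x) = s(u, v) := by
    rintro u v ⟨_, ⟨x, hx⟩⟩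
    exact ⟨x, (hgs x).symm.trans hx⟩
  obtain ⟨c2⟩ := pf3 V R g hedge
  have hcol : G.Colorable (3 * m) := by
    have hcard : Fintype.card (Fin m × Fin 3) = 3 * m := by
      simp [Nat.mul_comm]
    have C : G.Coloring (Fin m × Fin 3) := by
      refine Coloring.mk (fun v => (c1 v, c2 v)) ?_
      intro u v hadj heq
      rw [Prod.mk.injEq] at heq
      by_cases hrem : s(u, v) ∈ Set.range f
      · exact c2.valid (show R.Adj u v from ⟨hadj, hrem⟩) heq.2
      · exact c1.valid (show (oneRemoved G f).Adj u v from
          (SimpleGraph.deleteEdges_adj).mpr ⟨hadj, hrem⟩) heq.1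
    exact hcard ▸ C.colorable
  exact chromNum_le G hcol

lemma lower_main (V : Type) [Fintype V] (G : SimpleGraph V) :
    (chromNum G : ℝ) / 3 ≤ (robustChromNum G : ℝ) := by
  have hne : {m : ℕ | ∃ f : V → Sym2 V, IsOneSelection G f ∧
      chromNum (oneRemoved G f) = m}.Nonempty :=
    ⟨chromNum (oneRemoved G (fun v => s(v, v))), fun v => s(v, v),
      fun v => Sym2.mem_mk_left v v, rfl⟩
  obtain ⟨f, hf, hfeq⟩ := Nat.sInf_mem hne
  have h := lower_bound V G f hf
  rw [hfeq] at h
  have : (chromNum G : ℝ) ≤ 3 * (robustChromNum G : ℝ) := by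
    exact_mod_cast h
  linarith

lemma upper_main (V : Type) [Fintype V] (G : SimpleGraph V)
    (h : IsUnitIntervalGraph G) :
    (robustChromNum G : ℝ) ≤ (chromNum G : ℝ) / 3 + 2 := by
  classical
  obtain ⟨r, hr⟩ := h
  set n := Fintype.card V with hn
  let e0 : V ≃ Fin n := Fintype.equivFin V
  let rv : Fin n → ℝ := r ∘ e0.symm
  let σ : Equiv.Perm (Fin n) := Tuple.sort rv
  let e : Fin n ≃ V := σ.trans e0.symm
  have hmono : ∀ a b : Fin n, a ≤ b → r (e a) ≤ r (e b) :=
    fun a b hab => Tuple.monotone_sort rv hab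
  set m := chromNum G with hm
  set k := m / 3 + 2 with hk
  have hk0 : 0 < k := by omega
  -- clique bound
  have hcliquebound : ∀ (i j : ℕ) (hi : i < n) (hj : j < n), i ≤ j →
      G.Adj (e ⟨i, hi⟩) (e ⟨j, hj⟩) → j - i + 1 ≤ m := by
    intro i j hi hj hij hadj
    have hne : e ⟨i, hi⟩ ≠ e ⟨j, hj⟩ := G.ne_of_adj hadj
    have h1 : |r (e ⟨i, hi⟩) - r (e ⟨j, hj⟩)| < 1 :=
      (hr _ _ hne).mp hadj
    rw [abs_lt] at h1
    set S : Finset V := (Finset.Icc (⟨i, hi⟩ : Fin n) ⟨j, hj⟩).image e with hS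
    have hcard : S.card = j - i + 1 := by
      rw [hS, Finset.card_image_of_injective _ e.injective, Fin.card_Icc]
      simp only [Fin.val_mk]
      omega
    have hcliqueS : G.IsClique (S : Set V) := by
      intro a ha b hb hab
      rw [Finset.mem_coe, hS, Finset.mem_image] at ha hb
      obtain ⟨t1, ht1, rfl⟩ := ha
      obtain ⟨t2, ht2, rfl⟩ := hb
      obtain ⟨hi1, hj1⟩ := Finset.mem_Icc.mp ht1
      obtain ⟨hi2, hj2⟩ := Finset.mem_Icc.mp ht2
      refine (hr _ _ hab).mpr ?_
      have b1 := hmono ⟨i, hi⟩ t1 hi1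
      have b2 := hmono t1 ⟨j, hj⟩ hj1
      have b3 := hmono ⟨i, hi⟩ t2 hi2
      have b4 := hmono t2 ⟨j, hj⟩ hj2
      rw [abs_lt]
      constructor <;> linarith
    by_contra hcon
    push_neg at hcon
    have hfree : G.CliqueFree (m + 1) :=
      (chromNum_colorable V G).cliqueFree (lt_add_one m)
    obtain ⟨T, hTsub, hTcard⟩ := Finset.exists_subset_card_eq (by omega : m + 1 ≤ S.card)
    exact hfree T ⟨hcliqueS.subset (Finset.coe_subset.mpr hTsub), hTcard⟩
  -- the selection
  let f : V → Sym2 V := fun v =>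
    if _h2 : ((e.symm v : ℕ) % 3 = 2) then
      s(v, e ⟨(e.symm v : ℕ) - 2, Nat.lt_of_le_of_lt (Nat.sub_le _ _) (e.symm v).isLt⟩)
    else if h1 : (e.symm v : ℕ) + 1 < n then s(v, e ⟨(e.symm v : ℕ) + 1, h1⟩)
    else s(v, v)
  have hsel : IsOneSelection G f := by
    intro v
    simp only [f]
    split_ifs <;> exact Sym2.mem_mk_left _ _
  -- key color argument
  have key : ∀ u v : V, (oneRemoved G f).Adj u v → (e.symm u : ℕ) < (e.symm v : ℕ) →
      ((e.symm u : ℕ) / 3) % k ≠ ((e.symm v : ℕ) / 3) % k := by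
    intro u v hadj hlt heq
    obtain ⟨hG, hnr⟩ := (SimpleGraph.deleteEdges_adj).mp hadj
    have hiu : (e.symm u : ℕ) < n := (e.symm u).isLt
    have hjv : (e.symm v : ℕ) < n := (e.symm v).isLt
    by_cases hb : (e.symm u : ℕ) / 3 = (e.symm v : ℕ) / 3
    · -- same block: the edge was removed, contradiction
      apply hnr
      have hcases : (e.symm v : ℕ) = (e.symm u : ℕ) + 1 ∨
          ((e.symm v : ℕ) = (e.symm u : ℕ) + 2 ∧ (e.symm u : ℕ) % 3 = 0) := by omega
      rcases hcases with hc | ⟨hc, hc0⟩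
      · refine ⟨u, ?_⟩
        have hm3 : ¬ ((e.symm u : ℕ) % 3 = 2) := by omega
        have hlt1 : (e.symm u : ℕ) + 1 < n := by omega
        show f u = s(u, v)
        simp only [f]
        rw [dif_neg hm3, dif_pos hlt1]
        have hfin : (⟨(e.symm u : ℕ) + 1, hlt1⟩ : Fin n) = e.symm v := by
          apply Fin.ext; simp; omega
        rw [hfin, e.apply_symm_apply]
      · refine ⟨v, ?_⟩
        have hm3 : (e.symm v : ℕ) % 3 = 2 := by omega
        show f v = s(u, v)
        simp only [f]
        rw [dif_pos hm3]
        have hfin : (⟨(e.symm v : ℕ) - 2,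
            Nat.lt_of_le_of_lt (Nat.sub_le _ _) (e.symm v).isLt⟩ : Fin n) = e.symm u := by
          apply Fin.ext; simp; omega
        rw [hfin, e.apply_symm_apply, Sym2.eq_swap]
    · -- far apart: big clique, contradiction
      have hdivle : (e.symm u : ℕ) / 3 ≤ (e.symm v : ℕ) / 3 :=
        Nat.div_le_div_right (le_of_lt hlt)
      have hdvd : k ∣ (e.symm v : ℕ) / 3 - (e.symm u : ℕ) / 3 :=
        (Nat.modEq_iff_dvd' hdivle).mp heq
      have hge : k ≤ (e.symm v : ℕ) / 3 - (e.symm u : ℕ) / 3 :=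
        Nat.le_of_dvd (by omega) hdvd
      have hcb := hcliquebound (e.symm u : ℕ) (e.symm v : ℕ) hiu hjv (le_of_lt hlt) ?_
      · omega
      · rw [Fin.eta, Fin.eta, e.apply_symm_apply, e.apply_symm_apply]
        exact hG
  -- assemble
  have hcolk : (oneRemoved G f).Colorable k := by
    refine ⟨Coloring.mk (fun w => ⟨((e.symm w : ℕ) / 3) % k, Nat.mod_lt _ hk0⟩) ?_⟩
    intro u v hadj heq
    have hne : u ≠ v := (oneRemoved G f).ne_of_adj hadj
    have heqval : ((e.symm u : ℕ) / 3) % k = ((e.symm v : ℕ) / 3) % k :=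
      congrArg Fin.val heq
    rcases lt_trichotomy (e.symm u : ℕ) (e.symm v : ℕ) with hlt | heq2 | hgt
    · exact key u v hadj hlt heqval
    · exact hne (e.symm.injective (Fin.ext heq2))
    · exact key v u hadj.symm hgt heqval.symm
  have hrob : robustChromNum G ≤ k := by
    refine le_trans (Nat.sInf_le ?_) (chromNum_le _ hcolk)
    exact ⟨f, hsel, rfl⟩
  have hcast : ((m / 3 : ℕ) : ℝ) ≤ (m : ℝ) / 3 := Nat.cast_div_le
  have h1 : (robustChromNum G : ℝ) ≤ (k : ℝ) := Nat.cast_le.mpr hrob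
  rw [hk] at h1
  push_cast at h1
  linarith

end AuxRobust

/-- There is a constant `c` such that every finite unit interval graph `G`
satisfies `χ(G)/3 ≤ χ₁(G) ≤ χ(G)/3 + c`. -/
theorem robustChromNum_unitIntervalGraph :
    ∃ c : ℝ, ∀ (V : Type) [Fintype V] (G : SimpleGraph V),
      IsUnitIntervalGraph G →
        (chromNum G : ℝ) / 3 ≤ (robustChromNum G : ℝ) ∧
          (robustChromNum G : ℝ) ≤ (chromNum G : ℝ) / 3 + c := by
  refine ⟨2, ?_⟩
  intro V _ G h
  exact ⟨lower_main V G, upper_main V G h⟩
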